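/- Let A : ℝ^m → ℝⁿ be a linear map and let v ∈ ℝⁿ, regarded as the vector (0, v) ∈ ℝ^m × ℝⁿ. Let ϖ = graph(A) = {(x, Ax) : x ∈ ℝ^m}, with orthogonal projection p_ϖ. Then |p_ϖ((0,v))| ≤ (Lip(A)/√(1+Lip(A)²)) · |v|, where Lip(A) is the operator norm of A. -/

import Mathlib

private lemma stmt8_aux {L t a N w : ℝ} (h1 : N ^ 2 = t ^ 2 + a ^ 2)
    (h2 : N ^ 2 ≤ a * w) (h3 : a ≤ L * t)
    (ht0 : 0 ≤ t) (ha0 : 0 ≤ a) (hN0 : 0 ≤ N) (hw0 : 0 ≤ w) (hL0 : 0 ≤ L) :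
    N ≤ L / Real.sqrt (1 + L ^ 2) * w := by
  have h4 : a * (1 + L ^ 2) ≤ L ^ 2 * w := by
    rcases ha0.eq_or_lt with h | h
    · rw [← h, zero_mul]; positivity
    · have ha2 : a ^ 2 ≤ L ^ 2 * t ^ 2 := by nlinarith
      have : a * (a * (1 + L ^ 2)) ≤ a * (L ^ 2 * w) := by nlinarith
      exact le_of_mul_le_mul_left this h
  have h5 : N ^ 2 * (1 + L ^ 2) ≤ L ^ 2 * w ^ 2 := by nlinarith
  set s := Real.sqrt (1 + L ^ 2) with hs
  have hs2 : s ^ 2 = 1 + L ^ 2 := Real.sq_sqrt (by positivity)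
  have hs0 : 0 < s := Real.sqrt_pos.mpr (by positivity)
  have hNs : N * s ≤ L * w := by
    have hsq : (N * s) ^ 2 ≤ (L * w) ^ 2 := by nlinarith
    exact (abs_le_of_sq_le_sq' hsq (by positivity)).2
  calc N = N * s / s := by field_simp
    _ ≤ L * w / s := by exact div_le_div_of_nonneg_right hNs hs0.le
    _ = L / s * w := by ring

open RealInnerProductSpace in
theorem stmt8 {m n : ℕ}
    (A : EuclideanSpace ℝ (Fin m) →L[ℝ] EuclideanSpace ℝ (Fin n))
    (v : EuclideanSpace ℝ (Fin n)) :
    let V := WithLp 2 (EuclideanSpace ℝ (Fin m) × EuclideanSpace ℝ (Fin n))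
    let ϖ : Submodule ℝ V :=
      Submodule.comap (WithLp.linearEquiv 2 ℝ _).toLinearMap
        (LinearMap.graph (A : EuclideanSpace ℝ (Fin m) →ₗ[ℝ] EuclideanSpace ℝ (Fin n)))
    ‖(Submodule.orthogonalProjectionOnto ϖ ((WithLp.equiv 2 _).symm ((0 : EuclideanSpace ℝ (Fin m)), v)) : V)‖
      ≤ (‖A‖ / Real.sqrt (1 + ‖A‖ ^ 2)) * ‖v‖ := by
  intro V ϖ
  set u : V := (WithLp.equiv 2 _).symm ((0 : EuclideanSpace ℝ (Fin m)), v) with hu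
  set p : V := (Submodule.orthogonalProjectionOnto ϖ u : V) with hp
  have hpm : p ∈ ϖ := (Submodule.orthogonalProjectionOnto ϖ u).2
  have hgraph : p.snd = A p.fst := by
    have := hpm
    rw [Submodule.mem_comap] at this
    simp [LinearMap.mem_graph_iff] at this
    exact this
  have horth : ⟪u - p, p⟫ = 0 := Submodule.starProjection_inner_eq_zero (K := ϖ) u p hpm
  have hup : ⟪u, p⟫ = ⟪p, p⟫ := by
    have := horth
    rw [inner_sub_left] at this
    linarith
  have hinner : ⟪u, p⟫ = ⟪v, A p.fst⟫ := by
    rw [WithLp.prod_inner_apply, ← hgraph]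
    simp [hu]
  have h1 : ‖p‖ ^ 2 = ‖p.fst‖ ^ 2 + ‖A p.fst‖ ^ 2 := by
    rw [WithLp.prod_norm_sq_eq_of_L2, hgraph]
  have h2 : ‖p‖ ^ 2 ≤ ‖A p.fst‖ * ‖v‖ := by
    have hpp : ⟪p, p⟫ = ‖p‖ ^ 2 := real_inner_self_eq_norm_sq p
    have hle : ⟪v, A p.fst⟫ ≤ ‖v‖ * ‖A p.fst‖ := real_inner_le_norm v _
    nlinarith [hup, hinner]
  have h3 : ‖A p.fst‖ ≤ ‖A‖ * ‖p.fst‖ := A.le_opNorm p.fst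
  exact stmt8_aux h1 h2 h3 (norm_nonneg _) (norm_nonneg _) (norm_nonneg _)
    (norm_nonneg _) (norm_nonneg _)
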